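/- Let ε < 2, γ ≥ 0, C_coer > 0 and C ≥ 0 be real numbers with (2 − ε) · C_coer > 1 + γ. Suppose nonnegative real numbers A, N، G satisfy ((2 − ε)/2) A² + (C_coer/2) N² ≤ C + G² and G² ≤ √(1 + γ) · A · N. Then N² ≤ 2(2 − ε) C / ((2 − ε) C_coer − (1 + γ)) and A² ≤ (4/(2 − ε)) · ( C + ((1 + γ)/(2 − ε)) · N² ). -/

import Mathlib

/-- Real-number core of the a priori stability estimate (Lemma 3.7). -/
theorem pfc_stability_core
    (ε γ C_coer C : ℝ) (hε : ε < 2) (hγ : 0 ≤ γ) (hcoer : 0 < C_coer)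
    (hC : 0 ≤ C) (hsmall : 1 + γ < (2 - ε) * C_coer)
    (A N G : ℝ) (hA : 0 ≤ A) (hN : 0 ≤ N) (hG : 0 ≤ G)
    (h1 : ((2 - ε) / 2) * A ^ 2 + (C_coer / 2) * N ^ 2 ≤ C + G ^ 2)
    (h2 : G ^ 2 ≤ Real.sqrt (1 + γ) * A * N) :
    N ^ 2 ≤ 2 * (2 - ε) * C / ((2 - ε) * C_coer - (1 + γ)) ∧
      A ^ 2 ≤ (4 / (2 - ε)) * (C + ((1 + γ) / (2 - ε)) * N ^ 2) := by
  have h2e : (0:ℝ) < 2 - ε := by linarith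
  set s := Real.sqrt (1 + γ) with hsdef
  have hs : s ^ 2 = 1 + γ := Real.sq_sqrt (by linarith)
  have key : 4 * (2 - ε) * (s * A * N) ≤ (2 - ε) ^ 2 * A ^ 2 + 4 * (1 + γ) * N ^ 2 := by
    nlinarith [sq_nonneg ((2 - ε) * A - 2 * s * N)]
  have main : (2 - ε) ^ 2 * A ^ 2 + (2 * (2 - ε) * C_coer - 4 * (1 + γ)) * N ^ 2
      ≤ 4 * (2 - ε) * C := by nlinarith [h1, h2, key]
  have hD : (0:ℝ) < (2 - ε) * C_coer - (1 + γ) := by linarith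
  have key2 : 2 * (2 - ε) * (s * A * N) ≤ (2 - ε) ^ 2 * A ^ 2 + (1 + γ) * N ^ 2 := by
    nlinarith [sq_nonneg ((2 - ε) * A - s * N)]
  have main2 : ((2 - ε) * C_coer - (1 + γ)) * N ^ 2 ≤ 2 * (2 - ε) * C := by
    nlinarith [h1, h2, key2]
  constructor
  · rw [le_div_iff₀ hD]
    nlinarith [main2]
  · rw [show (4 / (2 - ε)) * (C + ((1 + γ) / (2 - ε)) * N ^ 2)
        = (4 * ((2 - ε) * C + (1 + γ) * N ^ 2)) / (2 - ε) ^ 2 by field_simp,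
      le_div_iff₀ (by positivity)]
    nlinarith [main, sq_nonneg N]
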